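/- Let R be a commutative ring and let Q_0,…,Q_ℓ ∈ R[Y_1,…,Y_n] be monomials that are pairwise distinct (as monomials). Then the product of all differences Q_i − Q_j (i ≠ j) is not a zero divisor in R[Y_1,…,Y_n]. Consequently, a nonzero polynomial F(T) of degree ≤ ℓ in one variable T with coefficients in R[Y_1,…,Y_n] cannot vanish at all of the ℓ+1 elements Q_0,…,Q_ℓ. -/

import Mathlib

open MvPolynomial

private lemma aux_nzd {R : Type*} [CommRing R] {n : ℕ} {a b : Fin n →₀ ℕ}
    (hab : toLex b < toLex a) :
    ∀ z : MvPolynomial (Fin n) R, z * (monomial a 1 - monomial b 1) = 0 → z = 0 := by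
  intro z hz
  by_contra hz0
  obtain ⟨d, hd, hmax⟩ := z.support.exists_max_image toLex
    (Finset.nonempty_iff_ne_empty.mpr (fun h => hz0 (MvPolynomial.support_eq_empty.mp h)))
  have h1 : coeff (d + a) (z * (monomial a 1 - monomial b 1)) = coeff d z := by
    rw [mul_sub, coeff_sub, coeff_mul_monomial', coeff_mul_monomial',
      if_pos (le_add_self : a ≤ d + a), add_tsub_cancel_right]
    have h2 : (if b ≤ d + a then coeff (d + a - b) z * 1 else 0) = 0 := by
      split_ifs with hb
      · rw [mul_one]
        by_contra hne
        have hmem : d + a - b ∈ z.support := MvPolynomial.mem_support_iff.mpr hne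
        have hle : toLex (d + a - b) ≤ toLex d := hmax _ hmem
        have heq : (d + a - b) + b = d + a := tsub_add_cancel_of_le hb
        have : toLex (d + a) ≤ toLex (d + b) := by
          calc toLex (d + a) = toLex (d + a - b) + toLex b := by
                rw [← toLex_add, heq]
            _ ≤ toLex d + toLex b := add_le_add hle le_rfl
            _ = toLex (d + b) := (toLex_add _ _).symm
        have hlt : toLex (d + b) < toLex (d + a) := by
          rw [toLex_add, toLex_add]
          exact add_lt_add_of_le_of_lt le_rfl hab
        exact absurd this (not_le.mpr hlt)
      · rfl
    rw [h2, mul_one, sub_zero]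
  rw [hz, MvPolynomial.coeff_zero] at h1
  exact (MvPolynomial.mem_support_iff.mp hd) h1.symm

private lemma key_nzd {R : Type*} [CommRing R] {n : ℕ} {a b : Fin n →₀ ℕ} (hab : a ≠ b) :
    (monomial a 1 - monomial b 1 : MvPolynomial (Fin n) R)
      ∈ nonZeroDivisors (MvPolynomial (Fin n) R) := by
  rw [mem_nonZeroDivisors_iff_right]
  intro z hz
  rcases lt_or_gt_of_ne (fun h : toLex a = toLex b => hab (toLex.injective h)) with h | h
  · exact aux_nzd h z (by rw [← neg_sub (monomial a 1 : MvPolynomial (Fin n) R), mul_neg, hz,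
      neg_zero])
  · exact aux_nzd h z hz

theorem stmt_10 {R : Type*} [CommRing R] (n ℓ : ℕ)
    (m : Fin (ℓ + 1) → (Fin n →₀ ℕ)) (hm : Function.Injective m) :
    (∏ q ∈ Finset.univ.filter (fun q : Fin (ℓ + 1) × Fin (ℓ + 1) => q.1 ≠ q.2),
        ((monomial (m q.1) 1 : MvPolynomial (Fin n) R) - monomial (m q.2) 1))
      ∈ nonZeroDivisors (MvPolynomial (Fin n) R) ∧
    ∀ F : Polynomial (MvPolynomial (Fin n) R), F ≠ 0 → F.natDegree ≤ ℓ →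
      ∃ i : Fin (ℓ + 1),
        Polynomial.eval (monomial (m i) 1 : MvPolynomial (Fin n) R) F ≠ 0 := by
  constructor
  · exact prod_mem fun q hq =>
      key_nzd (fun h => (Finset.mem_filter.mp hq).2 (hm h))
  · intro F hF hdeg
    by_contra hc
    push_neg at hc
    set v : Fin (ℓ + 1) → MvPolynomial (Fin n) R := fun i => monomial (m i) 1 with hv
    have hdet : (Matrix.vandermonde v).det ∈ nonZeroDivisors (MvPolynomial (Fin n) R) := by
      rw [Matrix.det_vandermonde]
      exact prod_mem fun i _ => prod_mem fun j hj =>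
        key_nzd (fun h => (Finset.mem_Ioi.mp hj).ne' (hm h))
    have hmv : (Matrix.vandermonde v).mulVec (fun j : Fin (ℓ + 1) => F.coeff j) = 0 := by
      funext i
      have hci := hc i
      rw [Polynomial.eval_eq_sum_range' (lt_of_le_of_lt hdeg (Nat.lt_succ_self ℓ))] at hci
      rw [← Fin.sum_univ_eq_sum_range (fun k => F.coeff k * (v i) ^ k) (ℓ + 1)] at hci
      simpa [Matrix.mulVec, dotProduct, Matrix.vandermonde_apply, mul_comm] using hci
    have hsmul : (Matrix.vandermonde v).det • (fun j : Fin (ℓ + 1) => F.coeff j)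
        = (0 : Fin (ℓ + 1) → MvPolynomial (Fin n) R) := by
      have h := congrArg (Matrix.mulVec (Matrix.adjugate (Matrix.vandermonde v))) hmv
      rwa [Matrix.mulVec_mulVec, Matrix.adjugate_mul, Matrix.smul_mulVec,
        Matrix.one_mulVec, Matrix.mulVec_zero] at h
    apply hF
    refine Polynomial.ext fun k => ?_
    rcases le_or_gt k ℓ with hk | hk
    · have h := congrFun hsmul ⟨k, Nat.lt_succ_of_le hk⟩
      simp only [Pi.smul_apply, smul_eq_mul, Pi.zero_apply] at h
      have := (mem_nonZeroDivisors_iff_right.mp hdet) _ (by rwa [mul_comm])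
      simpa using this
    · simp [Polynomial.coeff_eq_zero_of_natDegree_lt (lt_of_le_of_lt hdeg hk)]
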